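/- Let $f:\mathbb{R}^d \to \mathbb{R}$ be a $C^1$ function with polynomially bounded derivatives, with $\int f \varphi\, dx = 0$ where $\varphi$ is the invariant Gaussian measure of the OU semigroup $T_t$. Then for every $x \in \mathbb{R}^d$, $\lim_{t \to \infty} e^{\mu t}\, T_t f(x) = x \circ \int_{\mathbb{R}^d} \nabla f(y)\, \varphi(y)\, dy$. -/

import Mathlib

open MeasureTheory Filter

variable {d : ℕ}

lemma gauss_integrable {b : ℝ} (hb : 0 < b) :
    Integrable (fun y : EuclideanSpace ℝ (Fin d) => Real.exp (-b * ‖y‖ ^ 2)) := by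
  have h := (GaussianFourier.integrable_cexp_neg_mul_sq_norm_add (V := EuclideanSpace ℝ (Fin d))
    (b := (b : ℂ)) (by simpa using hb) 0 (0 : EuclideanSpace ℝ (Fin d))).norm
  simpa [Complex.norm_exp, ← Complex.ofReal_pow] using h

lemma pow_exp_le {b r : ℝ} (hb : 0 < b) (hr : 0 ≤ r) (k : ℕ) :
    r ^ k * Real.exp (-b * r ^ 2) ≤
      (1 + k.factorial * (2 / b) ^ k) * Real.exp (-(b / 2) * r ^ 2) := by
  have hx : (0:ℝ) ≤ (b / 2) * r ^ 2 := by positivity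
  have key : r ^ k ≤ (1 + k.factorial * (2 / b) ^ k) * Real.exp ((b / 2) * r ^ 2) := by
    have hexp1 : (1:ℝ) ≤ Real.exp ((b / 2) * r ^ 2) := Real.one_le_exp hx
    rcases le_total r 1 with h1 | h1
    · have h0 : r ^ k ≤ 1 := pow_le_one₀ hr h1
      have hF : (1:ℝ) ≤ 1 + k.factorial * (2 / b) ^ k :=
        le_add_of_nonneg_right (by positivity)
      have := mul_le_mul hF hexp1 zero_le_one (by positivity)
      linarith
    · have h2 : r ^ k ≤ r ^ (2 * k) := pow_le_pow_right₀ h1 (by omega)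
      have h3 : ((b / 2) * r ^ 2) ^ k / k.factorial ≤ Real.exp ((b / 2) * r ^ 2) :=
        Real.pow_div_factorial_le_exp _ hx k
      have h4 : r ^ (2 * k) = (r ^ 2) ^ k := by rw [pow_mul]
      have h5 : ((b / 2) * r ^ 2) ^ k = (b / 2) ^ k * (r ^ 2) ^ k := mul_pow _ _ _
      have h6 : (r ^ 2) ^ k ≤ k.factorial * (2 / b) ^ k * Real.exp ((b / 2) * r ^ 2) := by
        rw [h5] at h3
        have := (div_le_iff₀ (by positivity : (0:ℝ) < (k.factorial : ℝ))).1 h3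
        have hone : (2/b)^k * (b/2)^k = 1 := by
          rw [← mul_pow, (by field_simp : (2/b)*(b/2) = 1), one_pow]
        calc (r ^ 2) ^ k = (2/b)^k * ((b/2)^k * (r^2)^k) := by
              rw [← mul_assoc, hone, one_mul]
          _ ≤ (2/b)^k * (Real.exp ((b / 2) * r ^ 2) * k.factorial) := by
              apply mul_le_mul_of_nonneg_left this (by positivity)
          _ = k.factorial * (2 / b) ^ k * Real.exp ((b / 2) * r ^ 2) := by ring
      calc r ^ k ≤ (r ^ 2) ^ k := by rw [← h4]; exact h2
        _ ≤ k.factorial * (2 / b) ^ k * Real.exp ((b / 2) * r ^ 2) := h6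
        _ ≤ (1 + k.factorial * (2 / b) ^ k) * Real.exp ((b / 2) * r ^ 2) := by nlinarith
  have : r ^ k * Real.exp (-b * r ^ 2) =
      (r ^ k / Real.exp ((b/2) * r ^ 2)) * Real.exp (-(b / 2) * r ^ 2) := by
    rw [div_mul_eq_mul_div, mul_comm, mul_div_assoc, ← Real.exp_sub]
    ring_nf
  rw [this]
  apply mul_le_mul_of_nonneg_right _ (Real.exp_nonneg _)
  rw [div_le_iff₀ (Real.exp_pos _)]
  exact key

lemma poly_gauss_integrable {b : ℝ} (hb : 0 < b) (k : ℕ) :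
    Integrable (fun y : EuclideanSpace ℝ (Fin d) => ‖y‖ ^ k * Real.exp (-b * ‖y‖ ^ 2)) := by
  have h2 : Integrable (fun y : EuclideanSpace ℝ (Fin d) =>
      (1 + k.factorial * (2 / b) ^ k) * Real.exp (-(b / 2) * ‖y‖ ^ 2)) :=
    (gauss_integrable (by positivity)).const_mul _
  refine h2.mono' ?_ ?_
  · exact (Continuous.mul (by fun_prop) (by fun_prop)).aestronglyMeasurable
  · filter_upwards with y
    rw [Real.norm_eq_abs, abs_of_nonneg (by positivity)]
    exact pow_exp_le hb (norm_nonneg y) k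

lemma shift_pow_gauss_integrable {b : ℝ} (hb : 0 < b) (a : ℝ) (ha : 0 ≤ a) (k : ℕ) :
    Integrable (fun y : EuclideanSpace ℝ (Fin d) => (a + ‖y‖) ^ k * Real.exp (-b * ‖y‖ ^ 2)) := by
  have h2 : Integrable (fun y : EuclideanSpace ℝ (Fin d) => ((a+1)*2) ^ k *
      (Real.exp (-b * ‖y‖ ^ 2) + ‖y‖ ^ k * Real.exp (-b * ‖y‖ ^ 2))) :=
    ((gauss_integrable hb).add (poly_gauss_integrable hb k)).const_mul _
  refine h2.mono' ?_ ?_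
  · exact (Continuous.mul (by fun_prop) (by fun_prop)).aestronglyMeasurable
  · filter_upwards with y
    rw [Real.norm_eq_abs, abs_of_nonneg (by positivity)]
    have h1 : a + ‖y‖ ≤ (a+1)*2 * max 1 ‖y‖ := by
      rcases le_total ‖y‖ 1 with h | h
      · rw [max_eq_left h]; nlinarith [norm_nonneg y]
      · rw [max_eq_right h]; nlinarith [norm_nonneg y]
    have h3 : (a + ‖y‖) ^ k ≤ ((a+1)*2) ^ k * (max 1 ‖y‖) ^ k := by
      rw [← mul_pow]; exact pow_le_pow_left₀ (by positivity) h1 k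
    have h4 : (max 1 ‖y‖ : ℝ) ^ k ≤ 1 + ‖y‖ ^ k := by
      rcases le_total ‖y‖ 1 with h | h
      · rw [max_eq_left h]
        simp only [one_pow]
        nlinarith [pow_nonneg (norm_nonneg y) k]
      · rw [max_eq_right h]
        nlinarith [pow_nonneg (norm_nonneg y) k]
    have he : (0:ℝ) ≤ Real.exp (-b * ‖y‖ ^ 2) := Real.exp_nonneg _
    calc (a + ‖y‖) ^ k * Real.exp (-b * ‖y‖ ^ 2)
        ≤ ((a+1)*2) ^ k * (max 1 ‖y‖) ^ k * Real.exp (-b * ‖y‖ ^ 2) :=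
          mul_le_mul_of_nonneg_right h3 he
      _ ≤ ((a+1)*2) ^ k * (1 + ‖y‖ ^ k) * Real.exp (-b * ‖y‖ ^ 2) := by
          apply mul_le_mul_of_nonneg_right _ he
          exact mul_le_mul_of_nonneg_left h4 (by positivity)
      _ = ((a+1)*2) ^ k * (Real.exp (-b * ‖y‖ ^ 2) + ‖y‖ ^ k * Real.exp (-b * ‖y‖ ^ 2)) := by
          ring

set_option maxHeartbeats 1000000 in
/-- First-order asymptotics of the OU semigroup on centered `C¹` functions with
polynomially bounded derivatives: `e^{μ t} T_t f (x) → x ∘ ∫ ∇f dφ` as `t → ∞`. -/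
theorem OU_semigroup_first_order_asymptotics
    {d : ℕ} (μ σ : ℝ) (hμ : 0 < μ) (hσ : 0 < σ)
    (φ : EuclideanSpace ℝ (Fin d) → ℝ)
    (hφ : ∀ y, φ y = (μ / (Real.pi * σ ^ 2)) ^ ((d : ℝ) / 2) *
      Real.exp (-(μ / σ ^ 2) * ‖y‖ ^ 2))
    (T : ℝ → (EuclideanSpace ℝ (Fin d) → ℝ) → EuclideanSpace ℝ (Fin d) → ℝ)
    (hT : ∀ t f x, T t f x =
      ∫ y, f (Real.exp (-μ * t) • x + Real.sqrt (1 - Real.exp (-2 * μ * t)) • y) * φ y)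
    (f : EuclideanSpace ℝ (Fin d) → ℝ)
    (hf1 : ContDiff ℝ 1 f)
    (hgrow : ∃ (C₀ : ℝ) (n : ℕ), ∀ x, |f x| ≤ C₀ * (1 + ‖x‖ ^ n))
    (hgrad : ∃ (C₁ : ℝ) (n₁ : ℕ), ∀ x, ‖fderiv ℝ f x‖ ≤ C₁ * (1 + ‖x‖ ^ n₁))
    (hcentered : (∫ y, f y * φ y) = 0) :
    ∀ x : EuclideanSpace ℝ (Fin d),
      Tendsto (fun t : ℝ => Real.exp (μ * t) * T t f x) atTop
        (nhds (@inner ℝ _ _ x (∫ y, φ y • gradient f y))) := by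
  intro x
  obtain ⟨C₀, n, hC₀⟩ := hgrow
  obtain ⟨C₁, n₁, hC₁⟩ := hgrad
  set b := μ / σ ^ 2 with hbdef
  have hb : 0 < b := by positivity
  set c := (μ / (Real.pi * σ ^ 2)) ^ ((d : ℝ) / 2) with hcdef
  have hc : 0 < c := by
    apply Real.rpow_pos_of_pos
    have := Real.pi_pos
    positivity
  have hφ' : ∀ y : EuclideanSpace ℝ (Fin d), φ y = c * Real.exp (-b * ‖y‖ ^ 2) := hφ
  have hφ0 : ∀ y : EuclideanSpace ℝ (Fin d), 0 ≤ φ y := fun y => by rw [hφ']; positivity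
  have hφcont : Continuous φ := by
    have : φ = fun y : EuclideanSpace ℝ (Fin d) => c * Real.exp (-b * ‖y‖ ^ 2) := funext hφ'
    rw [this]; fun_prop
  have hC₀' : ∀ z : EuclideanSpace ℝ (Fin d), |f z| ≤ |C₀| * (1 + ‖z‖ ^ n) := fun z =>
    (hC₀ z).trans (mul_le_mul_of_nonneg_right (le_abs_self _) (by positivity))
  have hC₁' : ∀ z : EuclideanSpace ℝ (Fin d), ‖fderiv ℝ f z‖ ≤ |C₁| * (1 + ‖z‖ ^ n₁) := fun z =>
    (hC₁ z).trans (mul_le_mul_of_nonneg_right (le_abs_self _) (by positivity))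
  have hfc : Continuous f := hf1.continuous
  have hdf : Differentiable ℝ f := hf1.differentiable one_ne_zero
  have hdfc : Continuous (fderiv ℝ f) := hf1.continuous_fderiv one_ne_zero
  set A : ℝ := ‖x‖ + 1 with hAdef
  have hA1 : (1:ℝ) ≤ A := by
    rw [hAdef]; linarith [norm_nonneg x]
  have hkey : ∀ (k : ℕ) (u v : ℝ), 0 ≤ u → 0 ≤ v → u ≤ ‖x‖ + v →
      1 + u ^ k ≤ 2 * (A + v) ^ k := by
    intro k u v hu hv huv
    have h1 : u ^ k ≤ (A + v) ^ k :=
      pow_le_pow_left₀ hu (by rw [hAdef]; linarith) k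
    have h2 : (1:ℝ) ≤ (A + v) ^ k := one_le_pow₀ (by linarith)
    linarith
  have hmaj : ∀ (K : ℝ) (k : ℕ),
      Integrable (fun y : EuclideanSpace ℝ (Fin d) =>
        K * ((A + ‖y‖) ^ k * Real.exp (-b * ‖y‖ ^ 2))) :=
    fun K k => (shift_pow_gauss_integrable hb A (by linarith) k).const_mul K
  -- Integrability of f * φ
  have hint_fφ : Integrable (fun y : EuclideanSpace ℝ (Fin d) => f y * φ y) := by
    refine (hmaj (|C₀| * c * 2) n).mono' ((hfc.mul hφcont).aestronglyMeasurable) ?_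
    filter_upwards with y
    rw [Real.norm_eq_abs, abs_mul, abs_of_nonneg (hφ0 y), hφ' y]
    calc |f y| * (c * Real.exp (-b * ‖y‖ ^ 2))
        ≤ (|C₀| * (1 + ‖y‖ ^ n)) * (c * Real.exp (-b * ‖y‖ ^ 2)) :=
          mul_le_mul_of_nonneg_right (hC₀' y) (by positivity)
      _ ≤ (|C₀| * (2 * (A + ‖y‖) ^ n)) * (c * Real.exp (-b * ‖y‖ ^ 2)) := by
          refine mul_le_mul_of_nonneg_right (mul_le_mul_of_nonneg_left ?_ (abs_nonneg _))
            (by positivity)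
          exact hkey n ‖y‖ ‖y‖ (norm_nonneg _) (norm_nonneg _) (by linarith [norm_nonneg x])
      _ = |C₀| * c * 2 * ((A + ‖y‖) ^ n * Real.exp (-b * ‖y‖ ^ 2)) := by ring
  -- Integrability of the gradient integrand
  have hgradc : Continuous (gradient f) := by
    have : gradient f = fun y => (InnerProductSpace.toDual ℝ _).symm (fderiv ℝ f y) := rfl
    rw [this]
    exact (InnerProductSpace.toDual ℝ _).symm.continuous.comp hdfc
  have hgradn : ∀ y : EuclideanSpace ℝ (Fin d), ‖gradient f y‖ = ‖fderiv ℝ f y‖ := fun y =>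
    LinearIsometryEquiv.norm_map _ _
  have hint_grad : Integrable (fun y : EuclideanSpace ℝ (Fin d) => φ y • gradient f y) := by
    refine (hmaj (|C₁| * c * 2) n₁).mono' ((hφcont.smul hgradc).aestronglyMeasurable) ?_
    filter_upwards with y
    rw [norm_smul, Real.norm_eq_abs, abs_of_nonneg (hφ0 y), hgradn y, hφ' y]
    calc (c * Real.exp (-b * ‖y‖ ^ 2)) * ‖fderiv ℝ f y‖
        ≤ (c * Real.exp (-b * ‖y‖ ^ 2)) * (|C₁| * (1 + ‖y‖ ^ n₁)) :=
          mul_le_mul_of_nonneg_left (hC₁' y) (by positivity)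
      _ ≤ (c * Real.exp (-b * ‖y‖ ^ 2)) * (|C₁| * (2 * (A + ‖y‖) ^ n₁)) := by
          refine mul_le_mul_of_nonneg_left (mul_le_mul_of_nonneg_left ?_ (abs_nonneg _))
            (by positivity)
          exact hkey n₁ ‖y‖ ‖y‖ (norm_nonneg _) (norm_nonneg _) (by linarith [norm_nonneg x])
      _ = |C₁| * c * 2 * ((A + ‖y‖) ^ n₁ * Real.exp (-b * ‖y‖ ^ 2)) := by ring
  -- basic facts about ε and s for t ≥ 0
  have hεs : ∀ t : ℝ, 0 ≤ t →
      Real.exp (-μ * t) ≤ 1 ∧ 0 ≤ Real.sqrt (1 - Real.exp (-2 * μ * t)) ∧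
      Real.sqrt (1 - Real.exp (-2 * μ * t)) ≤ 1 ∧
      1 - Real.sqrt (1 - Real.exp (-2 * μ * t)) ≤ Real.exp (-μ * t) := by
    intro t ht
    have hε0 : 0 < Real.exp (-μ * t) := Real.exp_pos _
    have hε1 : Real.exp (-μ * t) ≤ 1 := by
      rw [show (1:ℝ) = Real.exp 0 by simp]
      exact Real.exp_le_exp.2 (by nlinarith)
    have hε2 : Real.exp (-2 * μ * t) = Real.exp (-μ * t) ^ 2 := by
      rw [sq, ← Real.exp_add]; ring_nf
    have hnn : 0 ≤ 1 - Real.exp (-2 * μ * t) := by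
      rw [hε2]; nlinarith
    have hs0 : 0 ≤ Real.sqrt (1 - Real.exp (-2 * μ * t)) := Real.sqrt_nonneg _
    have hs1 : Real.sqrt (1 - Real.exp (-2 * μ * t)) ≤ 1 :=
      Real.sqrt_le_one.2 (by nlinarith [Real.exp_pos (-2 * μ * t)])
    refine ⟨hε1, hs0, hs1, ?_⟩
    have hsq : Real.sqrt (1 - Real.exp (-2 * μ * t)) ^ 2 = 1 - Real.exp (-2 * μ * t) :=
      Real.sq_sqrt hnn
    nlinarith [hsq, hε2]
  -- the norm bound for the shifted point
  have hnorm_pt : ∀ t : ℝ, 0 ≤ t → ∀ y : EuclideanSpace ℝ (Fin d),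
      ‖Real.exp (-μ * t) • x + Real.sqrt (1 - Real.exp (-2 * μ * t)) • y‖ ≤ ‖x‖ + ‖y‖ := by
    intro t ht y
    obtain ⟨hε1, hs0, hs1, -⟩ := hεs t ht
    calc ‖Real.exp (-μ * t) • x + Real.sqrt (1 - Real.exp (-2 * μ * t)) • y‖
        ≤ ‖Real.exp (-μ * t) • x‖ + ‖Real.sqrt (1 - Real.exp (-2 * μ * t)) • y‖ :=
          norm_add_le _ _
      _ = Real.exp (-μ * t) * ‖x‖ + Real.sqrt (1 - Real.exp (-2 * μ * t)) * ‖y‖ := by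
          rw [norm_smul, norm_smul, Real.norm_eq_abs, Real.norm_eq_abs,
            abs_of_pos (Real.exp_pos _), abs_of_nonneg hs0]
      _ ≤ 1 * ‖x‖ + 1 * ‖y‖ :=
          add_le_add (mul_le_mul_of_nonneg_right hε1 (norm_nonneg x))
            (mul_le_mul_of_nonneg_right hs1 (norm_nonneg y))
      _ = ‖x‖ + ‖y‖ := by ring
  -- integrability of the translated integrand
  have hint_t : ∀ t : ℝ, 0 ≤ t → Integrable (fun y : EuclideanSpace ℝ (Fin d) =>
      f (Real.exp (-μ * t) • x + Real.sqrt (1 - Real.exp (-2 * μ * t)) • y) * φ y) := by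
    intro t ht
    have hcont : Continuous (fun y : EuclideanSpace ℝ (Fin d) =>
        f (Real.exp (-μ * t) • x + Real.sqrt (1 - Real.exp (-2 * μ * t)) • y) * φ y) := by
      fun_prop
    refine (hmaj (|C₀| * c * 2) n).mono' hcont.aestronglyMeasurable ?_
    filter_upwards with y
    set z := Real.exp (-μ * t) • x + Real.sqrt (1 - Real.exp (-2 * μ * t)) • y with hz
    rw [Real.norm_eq_abs, abs_mul, abs_of_nonneg (hφ0 y), hφ' y]
    calc |f z| * (c * Real.exp (-b * ‖y‖ ^ 2))
        ≤ (|C₀| * (1 + ‖z‖ ^ n)) * (c * Real.exp (-b * ‖y‖ ^ 2)) :=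
          mul_le_mul_of_nonneg_right (hC₀' z) (by positivity)
      _ ≤ (|C₀| * (2 * (A + ‖y‖) ^ n)) * (c * Real.exp (-b * ‖y‖ ^ 2)) := by
          refine mul_le_mul_of_nonneg_right (mul_le_mul_of_nonneg_left ?_ (abs_nonneg _))
            (by positivity)
          exact hkey n ‖z‖ ‖y‖ (norm_nonneg _) (norm_nonneg _) (hnorm_pt t ht y)
      _ = |C₀| * c * 2 * ((A + ‖y‖) ^ n * Real.exp (-b * ‖y‖ ^ 2)) := by ring
  -- the family of integrands for dominated convergence
  set F : ℝ → EuclideanSpace ℝ (Fin d) → ℝ := fun t y =>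
    Real.exp (μ * t) * ((f (Real.exp (-μ * t) • x +
      Real.sqrt (1 - Real.exp (-2 * μ * t)) • y) - f y) * φ y) with hFdef
  -- eventual equality
  have key_eq : ∀ᶠ t in atTop, (∫ y, F t y) = Real.exp (μ * t) * T t f x := by
    filter_upwards [eventually_ge_atTop (0:ℝ)] with t ht
    have hi1 : Integrable (fun y : EuclideanSpace ℝ (Fin d) =>
        (f (Real.exp (-μ * t) • x + Real.sqrt (1 - Real.exp (-2 * μ * t)) • y) - f y) * φ y) := by
      have h := (hint_t t ht).sub hint_fφ
      refine h.congr (Eventually.of_forall fun y => ?_)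
      simp only [Pi.sub_apply]
      ring
    calc (∫ y, F t y)
        = Real.exp (μ * t) * ∫ y, (f (Real.exp (-μ * t) • x +
            Real.sqrt (1 - Real.exp (-2 * μ * t)) • y) - f y) * φ y := by
          simp only [hFdef]
          rw [integral_const_mul]
      _ = Real.exp (μ * t) * ((∫ y, (f (Real.exp (-μ * t) • x +
            Real.sqrt (1 - Real.exp (-2 * μ * t)) • y) - f y) * φ y) + ∫ y, f y * φ y) := by
          rw [hcentered, add_zero]
      _ = Real.exp (μ * t) * ∫ y, ((f (Real.exp (-μ * t) • x +
            Real.sqrt (1 - Real.exp (-2 * μ * t)) • y) - f y) * φ y + f y * φ y) := by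
          rw [integral_add hi1 hint_fφ]
      _ = Real.exp (μ * t) * ∫ y, f (Real.exp (-μ * t) • x +
            Real.sqrt (1 - Real.exp (-2 * μ * t)) • y) * φ y := by
          congr 1
          refine integral_congr_ae (Eventually.of_forall fun y => ?_)
          ring
      _ = Real.exp (μ * t) * T t f x := by rw [hT]
  -- pointwise convergence
  have hptwise : ∀ y : EuclideanSpace ℝ (Fin d),
      Tendsto (fun t => F t y) atTop (nhds (fderiv ℝ f y x * φ y)) := by
    intro y
    set γ : ℝ → EuclideanSpace ℝ (Fin d) := fun ε => ε • x + Real.sqrt (1 - ε ^ 2) • y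
      with hγdef
    have hγ0 : γ 0 = y := by simp [hγdef]
    have hd1 : HasDerivAt (fun ε : ℝ => 1 - ε ^ 2) 0 0 := by
      have := ((hasDerivAt_pow 2 (0:ℝ)).const_sub 1)
      simpa using this
    have hd2 : HasDerivAt (fun ε : ℝ => Real.sqrt (1 - ε ^ 2)) 0 0 := by
      have h := (Real.hasDerivAt_sqrt (by norm_num : (1:ℝ) - 0 ^ 2 ≠ 0)).comp 0 hd1
      simpa [Function.comp_def] using h
    have hd3 : HasDerivAt γ x 0 := by
      have ha : HasDerivAt (fun ε : ℝ => ε • x) x 0 := by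
        simpa using (hasDerivAt_id (0:ℝ)).smul_const x
      have hb2 : HasDerivAt (fun ε : ℝ => Real.sqrt (1 - ε ^ 2) • y)
          ((0:ℝ) • y) 0 := hd2.smul_const y
      have h3 := ha.add hb2; rw [zero_smul, add_zero] at h3; exact h3
    have hd4 : HasDerivAt (fun ε => f (γ ε)) (fderiv ℝ f y x) 0 := by
      have h := (hdf (γ 0)).hasFDerivAt.comp_hasDerivAt 0 hd3
      rw [hγ0] at h
      exact h
    have hslope := hasDerivAt_iff_tendsto_slope.1 hd4
    have hε_to : Tendsto (fun t : ℝ => Real.exp (-μ * t)) atTop (nhdsWithin 0 {(0:ℝ)}ᶜ) := by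
      rw [tendsto_nhdsWithin_iff]
      constructor
      · have h1 : Tendsto (fun t : ℝ => μ * t) atTop atTop :=
          Tendsto.const_mul_atTop hμ tendsto_id
        have h2 : Tendsto (fun t : ℝ => -μ * t) atTop atBot := by
          have := tendsto_neg_atTop_atBot.comp h1
          refine this.congr fun t => ?_
          simp only [Function.comp_apply, neg_mul]
        exact Real.tendsto_exp_atBot.comp h2
      · filter_upwards with t
        exact Set.mem_compl_singleton_iff.2 (ne_of_gt (Real.exp_pos _))
    have hcomp := (hslope.comp hε_to).mul_const (φ y)
    have heq : ∀ t : ℝ, (slope (fun ε => f (γ ε)) 0) (Real.exp (-μ * t)) * φ y = F t y := by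
      intro t
      have hε2 : (1:ℝ) - Real.exp (-μ * t) ^ 2 = 1 - Real.exp (-2 * μ * t) := by
        rw [sq, ← Real.exp_add, show -μ * t + -μ * t = -2 * μ * t by ring]
      have hee : Real.exp (μ * t) * Real.exp (-μ * t) = 1 := by
        rw [← Real.exp_add]; simp
      have hγval : γ (Real.exp (-μ * t)) = Real.exp (-μ * t) • x +
          Real.sqrt (1 - Real.exp (-2 * μ * t)) • y := by
        rw [hγdef]
        simp only [hε2]
      rw [slope_def_field, hγ0, hγval, sub_zero, hFdef]
      rw [div_mul_eq_mul_div, div_eq_iff (ne_of_gt (Real.exp_pos (-μ * t)))]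
      set D : ℝ := f (Real.exp (-μ * t) • x + Real.sqrt (1 - Real.exp (-2 * μ * t)) • y) - f y
      linear_combination -D * φ y * hee
    exact (hcomp.congr heq).congr' (by filter_upwards with t using rfl)
  -- domination
  set bound : EuclideanSpace ℝ (Fin d) → ℝ := fun y =>
    |C₁| * c * 2 * ((A + ‖y‖) ^ (n₁ + 1) * Real.exp (-b * ‖y‖ ^ 2)) with hbounddef
  have h_bound : ∀ᶠ t in atTop, ∀ᵐ y, ‖F t y‖ ≤ bound y := by
    filter_upwards [eventually_ge_atTop (0:ℝ)] with t ht
    filter_upwards with y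
    obtain ⟨hε1, hs0, hs1, h1s⟩ := hεs t ht
    set ε := Real.exp (-μ * t) with hεdef
    set s := Real.sqrt (1 - Real.exp (-2 * μ * t)) with hsdef
    set a : EuclideanSpace ℝ (Fin d) := ε • x + s • y with hadef
    set R := ‖x‖ + ‖y‖ with hRdef
    have hR0 : 0 ≤ R := by rw [hRdef]; positivity
    have hmema : a ∈ Metric.closedBall (0 : EuclideanSpace ℝ (Fin d)) R := by
      rw [Metric.mem_closedBall, dist_zero_right]
      exact hnorm_pt t ht y
    have hmemy : y ∈ Metric.closedBall (0 : EuclideanSpace ℝ (Fin d)) R := by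
      rw [Metric.mem_closedBall, dist_zero_right, hRdef]
      linarith [norm_nonneg x]
    have hCb : ∀ z ∈ Metric.closedBall (0 : EuclideanSpace ℝ (Fin d)) R,
        ‖fderiv ℝ f z‖ ≤ |C₁| * (1 + R ^ n₁) := by
      intro z hz
      rw [Metric.mem_closedBall, dist_zero_right] at hz
      refine (hC₁' z).trans (mul_le_mul_of_nonneg_left ?_ (abs_nonneg _))
      have := pow_le_pow_left₀ (norm_nonneg z) hz n₁
      linarith
    have hmvt := (convex_closedBall (0 : EuclideanSpace ℝ (Fin d)) R).norm_image_sub_le_of_norm_fderiv_le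
      (fun z _ => hdf z) hCb hmemy hmema
    have hdiff : ‖a - y‖ ≤ ε * R := by
      have hay : a - y = ε • x + (s - 1) • y := by
        rw [hadef, sub_smul, one_smul]
        abel
      have habs : |s - 1| = 1 - s := by
        rw [abs_sub_comm, abs_of_nonneg (by linarith)]
      calc ‖a - y‖ = ‖ε • x + (s - 1) • y‖ := by rw [hay]
        _ ≤ ‖ε • x‖ + ‖(s - 1) • y‖ := norm_add_le _ _
        _ = ε * ‖x‖ + |s - 1| * ‖y‖ := by
            rw [norm_smul, norm_smul, Real.norm_eq_abs, Real.norm_eq_abs,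
              abs_of_pos (Real.exp_pos _)]
        _ ≤ ε * ‖x‖ + ε * ‖y‖ := by
            rw [habs]
            exact add_le_add le_rfl (mul_le_mul_of_nonneg_right h1s (norm_nonneg _))
        _ = ε * R := by rw [hRdef]; ring
    have hεexp : Real.exp (μ * t) * ε = 1 := by
      rw [hεdef, ← Real.exp_add]; simp
    have hfay : |f a - f y| ≤ |C₁| * (1 + R ^ n₁) * (ε * R) := by
      refine le_trans ?_ (mul_le_mul_of_nonneg_left hdiff (by positivity))
      simpa [Real.norm_eq_abs] using hmvt
    calc ‖F t y‖ = Real.exp (μ * t) * (|f a - f y| * φ y) := by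
          simp only [hFdef]
          rw [Real.norm_eq_abs, abs_mul, abs_mul, abs_of_pos (Real.exp_pos _),
            abs_of_nonneg (hφ0 y), hadef, hεdef, hsdef]
      _ ≤ Real.exp (μ * t) * ((|C₁| * (1 + R ^ n₁) * (ε * R)) * φ y) := by
          refine mul_le_mul_of_nonneg_left ?_ (Real.exp_pos _).le
          exact mul_le_mul_of_nonneg_right hfay (hφ0 y)
      _ = (Real.exp (μ * t) * ε) * (|C₁| * ((1 + R ^ n₁) * R) * φ y) := by ring
      _ = |C₁| * ((1 + R ^ n₁) * R) * φ y := by rw [hεexp, one_mul]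
      _ ≤ bound y := by
          rw [hφ' y, hbounddef]
          have h1 : 1 + R ^ n₁ ≤ 2 * (A + ‖y‖) ^ n₁ :=
            hkey n₁ R ‖y‖ hR0 (norm_nonneg _) le_rfl
          have h2 : R ≤ A + ‖y‖ := by rw [hRdef, hAdef]; linarith
          have h3 : (1 + R ^ n₁) * R ≤ 2 * (A + ‖y‖) ^ n₁ * (A + ‖y‖) := by
            refine mul_le_mul h1 h2 hR0 (by positivity)
          have h4 : (A + ‖y‖) ^ (n₁ + 1) = (A + ‖y‖) ^ n₁ * (A + ‖y‖) := pow_succ _ _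
          calc |C₁| * ((1 + R ^ n₁) * R) * (c * Real.exp (-b * ‖y‖ ^ 2))
              ≤ |C₁| * (2 * (A + ‖y‖) ^ n₁ * (A + ‖y‖)) * (c * Real.exp (-b * ‖y‖ ^ 2)) := by
                refine mul_le_mul_of_nonneg_right
                  (mul_le_mul_of_nonneg_left h3 (abs_nonneg _)) (by positivity)
            _ = |C₁| * c * 2 * ((A + ‖y‖) ^ (n₁ + 1) * Real.exp (-b * ‖y‖ ^ 2)) := by
                rw [h4]; ring
  have h_meas : ∀ᶠ t in atTop, AEStronglyMeasurable (F t) (volume (α := EuclideanSpace ℝ (Fin d))) := by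
    filter_upwards with t
    have hcont : Continuous (fun y : EuclideanSpace ℝ (Fin d) =>
        Real.exp (μ * t) * ((f (Real.exp (-μ * t) • x +
          Real.sqrt (1 - Real.exp (-2 * μ * t)) • y) - f y) * φ y)) := by fun_prop
    exact hcont.aestronglyMeasurable
  have hbound_int : Integrable bound := hmaj _ _
  have hDCT := tendsto_integral_filter_of_dominated_convergence bound h_meas h_bound
    hbound_int (Eventually.of_forall hptwise)
  have L_eq : (∫ y, fderiv ℝ f y x * φ y) =
      @inner ℝ _ _ x (∫ y, φ y • gradient f y) := by
    have hcomm := ContinuousLinearMap.integral_comp_comm (innerSL ℝ x) hint_grad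
    calc (∫ y, fderiv ℝ f y x * φ y)
        = ∫ y, (innerSL ℝ x) (φ y • gradient f y) := by
          refine integral_congr_ae (Eventually.of_forall fun y => ?_)
          beta_reduce
          rw [innerSL_apply_apply, real_inner_smul_right, real_inner_comm]
          rw [show inner ℝ (gradient f y) x = fderiv ℝ f y x from
            InnerProductSpace.toDual_symm_apply]
          ring
      _ = (innerSL ℝ x) (∫ y, φ y • gradient f y) := hcomm
      _ = @inner ℝ _ _ x (∫ y, φ y • gradient f y) := innerSL_apply_apply _ _ _
  rw [L_eq] at hDCT
  exact Tendsto.congr' key_eq hDCT
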